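/- Let Γ be a residually finite group acting transitively on a set Ω. Suppose that for all x, y ∈ Ω with x ≠ y there exists a finite-index subgroup Δ ≤ Γ such that x and y lie in different Δ-orbits. Then for every prime p the restricted permutational wreath product F_p ≀ (Γ, Ω), i.e. the semidirect product (⊕_{x∈Ω} F_p) ⋊ Γ, is residually finite. -/

import Mathlib

open Filter Topology
open scoped commutatorElement

/-- `ngen G` is the minimal number of generators `d(G)` of a group `G`. -/
noncomputable def ngen (G : Type*) [Group G] : ℕ :=
  sInf {n | ∃ S : Finset G, S.card = n ∧ Subgroup.closure (S : Set G) = ⊤}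

/-- `phiP p G` is `Φ_p(G)`, the subgroup of `G` generated by all commutators
and all `p`-th powers. -/
def phiP (p : ℕ) (G : Type*) [Group G] : Subgroup G :=
  Subgroup.normalClosure ({x | ∃ a b : G, x = ⁅a, b⁆} ∪ {x | ∃ g : G, x = g ^ p})

instance phiP_normal (p : ℕ) (G : Type*) [Group G] : (phiP p G).Normal :=
  Subgroup.normalClosure_normal

/-- `dp p G = d_p(G)`, the minimal number of generators of `G/Φ_p(G)`. -/
noncomputable def dp (p : ℕ) (G : Type*) [Group G] : ℕ := ngen (G ⧸ phiP p G)

/-- `subCount G n = s_n(G)`, the number of (finite-index) subgroups of `G`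
of index at most `n`. -/
noncomputable def subCount (G : Type*) [Group G] (n : ℕ) : ℕ :=
  Nat.card {H : Subgroup G // 0 < H.index ∧ H.index ≤ n}

/-- `dpMax p G m = d_p(m)`, the maximum of `d_p(U)` over subgroups `U ≤ G`
of index exactly `p^m`. -/
noncomputable def dpMax (p : ℕ) (G : Type*) [Group G] (m : ℕ) : ℕ :=
  sSup {d | ∃ U : Subgroup G, U.index = p ^ m ∧ d = dp p ↥U}

/-- A group is residually finite if every nontrivial element avoids some
finite-index (normal) subgroup. -/
def IsResiduallyFinite (G : Type*) [Group G] : Prop :=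
  ∀ g : G, g ≠ 1 → ∃ H : Subgroup G, H.Normal ∧ 0 < H.index ∧ g ∉ H

/-- Conversion of additive automorphisms to multiplicative automorphisms of
the `Multiplicative` type tag, as a group homomorphism. -/
def addAutToMulAut (A : Type*) [AddGroup A] :
    Multiplicative (AddAut A) →* MulAut (Multiplicative A) where
  toFun e := AddEquiv.toMultiplicative (Multiplicative.toAdd e)
  map_one' := rfl
  map_mul' _ _ := rfl

/-- The action of `Γ` on the base group `⊕_{x ∈ Ω} F_p` of the wreath product
`F_p ≀ (Γ, Ω)`, given by `(γ • f) x = f (γ⁻¹ • x)`. -/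
noncomputable def wreathPhi (p : ℕ) (G X : Type*) [Group G] [MulAction G X] :
    G →* MulAut (Multiplicative (X →₀ ZMod p)) :=
  letI := Finsupp.comapSMul (G := G) (α := X) (M := ZMod p)
  letI := Finsupp.comapMulAction (G := G) (α := X) (M := ZMod p)
  letI := Finsupp.comapDistribMulAction (G := G) (α := X) (M := ZMod p)
  (addAutToMulAut _).comp (DistribMulAction.toAddAut G (X →₀ ZMod p))

/-- The restricted permutational wreath product `F_p ≀ (Γ, Ω)`,
i.e. the semidirect product `(⊕_{x ∈ Ω} F_p) ⋊ Γ`. -/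
abbrev WreathProduct (p : ℕ) (G X : Type*) [Group G] [MulAction G X] :=
  SemidirectProduct (Multiplicative (X →₀ ZMod p)) G (wreathPhi p G X)


section Aux

/-- Kernel argument: a hom to a finite group that doesn't kill `g` witnesses
residual finiteness at `g`. -/
lemma exists_normal_of_hom {G F : Type*} [Group G] [Group F] [Finite F]
    (ψ : G →* F) (g : G) (h : ψ g ≠ 1) :
    ∃ H : Subgroup G, H.Normal ∧ 0 < H.index ∧ g ∉ H := by
  refine ⟨ψ.ker, inferInstance, ?_, by simpa [MonoidHom.mem_ker] using h⟩
  rw [Subgroup.index_ker]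
  have : Nonempty ψ.range := ⟨1⟩
  exact Nat.card_pos

instance semidirectProduct_finite {N G : Type*} [Group N] [Group G] {φ : G →* MulAut N}
    [Finite N] [Finite G] : Finite (N ⋊[φ] G) :=
  Finite.of_injective (fun x => (x.left, x.right)) fun a b h =>
    SemidirectProduct.ext (congrArg Prod.fst h) (congrArg Prod.snd h)

variable {Γ : Type*} [Group Γ] (Δ : Subgroup Γ) (Ω : Type*) [MulAction Γ Ω]

/-- The setoid on `Ω` whose classes are the `Δ`-orbits. -/
def orbSetoid : Setoid Ω where
  r x y := ∃ δ ∈ Δ, δ • x = y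
  iseqv := by
    refine ⟨fun x => ⟨1, Δ.one_mem, one_smul _ _⟩, ?_, ?_⟩
    · rintro x y ⟨δ, hδ, rfl⟩
      exact ⟨δ⁻¹, Δ.inv_mem hδ, by simp⟩
    · rintro x y z ⟨δ, hδ, rfl⟩ ⟨ε, hε, rfl⟩
      exact ⟨ε * δ, Δ.mul_mem hε hδ, (mul_smul _ _ _)⟩

/-- The set of `Δ`-orbits on `Ω`. -/
def OrbQuot : Type _ := Quotient (orbSetoid Δ Ω)

variable {Ω}

/-- The `Δ`-orbit of a point. -/
def oq (x : Ω) : OrbQuot Δ Ω := Quotient.mk _ x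

lemma oq_surjective : Function.Surjective (oq (Ω := Ω) Δ) :=
  fun c => Quotient.inductionOn c fun x => ⟨x, rfl⟩

variable [Δ.Normal]

instance OrbQuot.instMulAction : MulAction Γ (OrbQuot Δ Ω) where
  smul γ := Quotient.map (γ • ·) (by
    rintro x y ⟨δ, hδ, rfl⟩
    exact ⟨γ * δ * γ⁻¹, Subgroup.Normal.conj_mem ‹Δ.Normal› δ hδ γ, by
      simp [mul_smul]⟩)
  one_smul c := Quotient.inductionOn c fun x => congrArg _ (one_smul _ x)
  mul_smul a b c := Quotient.inductionOn c fun x => congrArg _ (mul_smul a b x)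

@[simp] lemma oq_smul (γ : Γ) (x : Ω) : γ • oq Δ x = oq Δ (γ • x) := rfl

lemma oq_smul_mem {δ : Γ} (hδ : δ ∈ Δ) (c : OrbQuot Δ Ω) : δ • c = c :=
  Quotient.inductionOn c fun x => Quotient.sound ⟨δ⁻¹, Δ.inv_mem hδ, inv_smul_smul δ x⟩

instance OrbQuot.instMulActionQuot : MulAction (Γ ⧸ Δ) (OrbQuot Δ Ω) where
  smul q c := Quotient.liftOn' q (fun γ => γ • c) (by
    intro a b hab
    have h : a⁻¹ * b ∈ Δ := QuotientGroup.leftRel_apply.mp hab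
    have hb : b = a * (a⁻¹ * b) := by group
    conv_rhs => rw [hb]
    rw [mul_smul, oq_smul_mem Δ h])
  one_smul c := one_smul Γ c
  mul_smul a b c := by
    obtain ⟨a, rfl⟩ := QuotientGroup.mk_surjective a
    obtain ⟨b, rfl⟩ := QuotientGroup.mk_surjective b
    show (a * b) • c = a • (b • c)
    exact mul_smul a b c

@[simp] lemma oq_qsmul (γ : Γ) (c : OrbQuot Δ Ω) :
    (QuotientGroup.mk γ : Γ ⧸ Δ) • c = γ • c := rfl

end Aux

lemma wreathPhi_apply {G X : Type*} [Group G] [MulAction G X] (p : ℕ) (γ : G) (f : X →₀ ZMod p) :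
    (wreathPhi p G X γ) (Multiplicative.ofAdd f) =
      Multiplicative.ofAdd (Finsupp.mapDomain (γ • ·) f) := rfl

theorem wreath_product_residually_finite
    (Γ Ω : Type*) [Group Γ] [MulAction Γ Ω] [MulAction.IsPretransitive Γ Ω]
    (hres : IsResiduallyFinite Γ)
    (hsep : ∀ x y : Ω, x ≠ y → ∃ Δ : Subgroup Γ, 0 < Δ.index ∧
      y ∉ MulAction.orbit ↥Δ x)
    (p : ℕ) (hp : p.Prime) :
    IsResiduallyFinite (WreathProduct p Γ Ω) := by
  classical
  intro g hg
  by_cases hγ : g.right = 1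
  · -- `g.right = 1`, so `g.left ≠ 1`; separate using the orbit quotient
    have hgl : g.left ≠ 1 := fun h => hg (SemidirectProduct.ext h hγ)
    set f : Ω →₀ ZMod p := Multiplicative.toAdd g.left with hfdef
    have hf0 : f ≠ 0 := fun h => hgl (by simpa [hfdef] using h)
    obtain ⟨x₀, hx₀⟩ := Finsupp.support_nonempty_iff.mpr hf0
    set s := f.support with hsdef
    have D : ∀ x y : Ω, ∃ Δ : Subgroup Γ,
        Δ.FiniteIndex ∧ (x ≠ y → y ∉ MulAction.orbit ↥Δ x) := by
      intro x y
      by_cases h : x ≠ y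
      · obtain ⟨Δ, h1, h2⟩ := hsep x y h
        exact ⟨Δ, ⟨h1.ne'⟩, fun _ => h2⟩
      · exact ⟨⊤, inferInstance, fun h' => absurd h' h⟩
    choose Dsub hDfi hDsep using D
    set Δ₀ : Subgroup Γ := ⨅ x : s, ⨅ y : s, Dsub x y with hΔ₀
    haveI : Δ₀.FiniteIndex :=
      Subgroup.finiteIndex_iInf fun x => Subgroup.finiteIndex_iInf fun y => hDfi x y
    set Δ : Subgroup Γ := Δ₀.normalCore with hΔ
    haveI hΔn : Δ.Normal := Subgroup.normalCore_normal Δ₀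
    haveI : Δ.FiniteIndex := Subgroup.finiteIndex_normalCore Δ₀
    haveI : Finite (Γ ⧸ Δ) := Subgroup.finite_quotient_of_finiteIndex
    haveI : NeZero p := ⟨hp.ne_zero⟩
    haveI : Finite (OrbQuot Δ Ω) := by
      refine Finite.of_surjective (fun q : Γ ⧸ Δ => q • oq Δ x₀) ?_
      intro c
      obtain ⟨ω, rfl⟩ := oq_surjective Δ c
      obtain ⟨γ, rfl⟩ := MulAction.exists_smul_eq Γ x₀ ω
      exact ⟨QuotientGroup.mk γ, rfl⟩
    haveI : Finite (OrbQuot Δ Ω →₀ ZMod p) :=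
      Finite.of_injective (fun f : OrbQuot Δ Ω →₀ ZMod p => ⇑f) DFunLike.coe_injective
    let m : (Ω →₀ ZMod p) →+ (OrbQuot Δ Ω →₀ ZMod p) :=
      Finsupp.mapDomain.addMonoidHom (oq Δ)
    let mm : Multiplicative (Ω →₀ ZMod p) →* Multiplicative (OrbQuot Δ Ω →₀ ZMod p) :=
      AddMonoidHom.toMultiplicative m
    have compat : ∀ γ : Γ, mm.comp (wreathPhi p Γ Ω γ).toMonoidHom
        = ((wreathPhi p (Γ ⧸ Δ) (OrbQuot Δ Ω) (QuotientGroup.mk γ)).toMonoidHom).comp mm := by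
      intro γ
      apply MonoidHom.ext
      intro x
      show Multiplicative.ofAdd
          (Finsupp.mapDomain (oq Δ) (Finsupp.mapDomain (γ • ·) x.toAdd))
        = Multiplicative.ofAdd
          (Finsupp.mapDomain ((QuotientGroup.mk γ : Γ ⧸ Δ) • ·)
            (Finsupp.mapDomain (oq Δ) x.toAdd))
      rw [← Finsupp.mapDomain_comp, ← Finsupp.mapDomain_comp]
      rfl
    refine exists_normal_of_hom
      (SemidirectProduct.map mm (QuotientGroup.mk' Δ) compat) g ?_
    intro h1
    have hleft : mm g.left = 1 := by
      have h2 := congrArg SemidirectProduct.left h1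
      exact h2
    have hmf : Finsupp.mapDomain (oq Δ) f = 0 := by
      have : Multiplicative.ofAdd (Finsupp.mapDomain (oq Δ) f) = 1 := hleft
      exact ofAdd_eq_one.mp this
    have hinj : Set.InjOn (oq Δ) (↑s : Set Ω) := by
      intro x hx y hy hxy
      by_contra hne
      obtain ⟨δ, hδ, hδxy⟩ := Quotient.exact hxy
      have hΔle : Δ ≤ Dsub x y :=
        le_trans (Subgroup.normalCore_le Δ₀)
          (le_trans (iInf_le _ (⟨x, hx⟩ : s)) (iInf_le _ (⟨y, hy⟩ : s)))
      exact hDsep x y hne (MulAction.mem_orbit_iff.mpr ⟨⟨δ, hΔle hδ⟩, hδxy⟩)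
    have heval : Finsupp.mapDomain (oq Δ) f (oq Δ x₀) = f x₀ :=
      Finsupp.mapDomain_apply' (↑s : Set Ω) f (subset_refl _) hinj hx₀
    rw [hmf] at heval
    exact Finsupp.mem_support_iff.mp hx₀ heval.symm
  · -- `g.right ≠ 1`: use residual finiteness of `Γ`
    obtain ⟨H, hHn, hHi, hgH⟩ := hres g.right hγ
    haveI := hHn
    haveI : H.FiniteIndex := ⟨hHi.ne'⟩
    haveI : Finite (Γ ⧸ H) := Subgroup.finite_quotient_of_finiteIndex
    refine exists_normal_of_hom
      ((QuotientGroup.mk' H).comp SemidirectProduct.rightHom) g ?_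
    simpa [QuotientGroup.eq_one_iff] using hgH
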